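/- For every natural number n ≥ 1, the second order average degree of the DSFN at generation n satisfies the exact identity of real numbers [(2^{n+1} − 2)^2 + 32·(4^{n−1} − 2·3^{n−1} + 2^{n−1}) + 4·(3^{n−1} − 1) + 2·(5·3^n − (2n+5)·2^n)] / (4·(3^n − 2^n)) = [3·(4/3)^n − (n + 1/2)·(2/3)^n − 5/2] / (1 − (2/3)^n); consequently, multiplying by (3/4)^n, this quantity divided by (4/3)^n tends to 3 as n → ∞, so the second order average degree diverges exponentially. -/

import Mathlib

open Filter



/-- For every `n ≥ 1`, the second order average degree of the DSFN
at generation `n` satisfies the exact identity of real numbers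
`[(2^(n+1) − 2)² + 32·(4^(n-1) − 2·3^(n-1) + 2^(n-1)) + 4·(3^(n-1) − 1)
  + 2·(5·3^n − (2n+5)·2^n)] / (4·(3^n − 2^n))
 = [3·(4/3)^n − (n + 1/2)·(2/3)^n − 5/2] / (1 − (2/3)^n)`;
consequently, multiplying by `(3/4)^n`, this quantity divided by `(4/3)^n` tends to `3`
as `n → ∞`, so the second order average degree diverges exponentially. -/
theorem dsfn_second_order_average_degree :
    (∀ n : ℕ, 1 ≤ n →
      (((2 : ℝ) ^ (n + 1) - 2) ^ 2
          + 32 * ((4 : ℝ) ^ (n - 1) - 2 * 3 ^ (n - 1) + 2 ^ (n - 1))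
          + 4 * ((3 : ℝ) ^ (n - 1) - 1)
          + 2 * (5 * (3 : ℝ) ^ n - (2 * n + 5) * 2 ^ n))
        / (4 * ((3 : ℝ) ^ n - 2 ^ n))
      = (3 * ((4 : ℝ) / 3) ^ n - ((n : ℝ) + 1 / 2) * ((2 : ℝ) / 3) ^ n - 5 / 2)
        / (1 - ((2 : ℝ) / 3) ^ n)) ∧
    Filter.Tendsto
      (fun n : ℕ =>
        (((2 : ℝ) ^ (n + 1) - 2) ^ 2
            + 32 * ((4 : ℝ) ^ (n - 1) - 2 * 3 ^ (n - 1) + 2 ^ (n - 1))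
            + 4 * ((3 : ℝ) ^ (n - 1) - 1)
            + 2 * (5 * (3 : ℝ) ^ n - (2 * n + 5) * 2 ^ n))
          / (4 * ((3 : ℝ) ^ n - 2 ^ n)) * ((3 : ℝ) / 4) ^ n)
      Filter.atTop (nhds 3) := by
  have hid : ∀ n : ℕ, 1 ≤ n →
      (((2 : ℝ) ^ (n + 1) - 2) ^ 2
          + 32 * ((4 : ℝ) ^ (n - 1) - 2 * 3 ^ (n - 1) + 2 ^ (n - 1))
          + 4 * ((3 : ℝ) ^ (n - 1) - 1)
          + 2 * (5 * (3 : ℝ) ^ n - (2 * n + 5) * 2 ^ n))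
        / (4 * ((3 : ℝ) ^ n - 2 ^ n))
      = (3 * ((4 : ℝ) / 3) ^ n - ((n : ℝ) + 1 / 2) * ((2 : ℝ) / 3) ^ n - 5 / 2)
        / (1 - ((2 : ℝ) / 3) ^ n) := by
    rintro n hn
    obtain ⟨m, rfl⟩ := Nat.exists_eq_add_of_le hn
    have hd1 : (3 : ℝ) ^ (1 + m) - 2 ^ (1 + m) ≠ 0 := by
      have : (2 : ℝ) ^ (1 + m) < 3 ^ (1 + m) :=
        pow_lt_pow_left₀ (by norm_num) (by norm_num) (by omega)
      linarith
    have hd2 : (1 : ℝ) - ((2 : ℝ) / 3) ^ (1 + m) ≠ 0 := by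
      have : ((2 : ℝ) / 3) ^ (1 + m) < 1 ^ (1 + m) :=
        pow_lt_pow_left₀ (by norm_num) (by norm_num) (by omega)
      simp at this; linarith
    have hsub : 1 + m - 1 = m := by omega
    rw [hsub]
    push_cast
    field_simp
    rw [show ((4:ℝ)) = 2*2 by norm_num]
    simp only [mul_pow]
    simp only [div_pow]
    field_simp
    ring_nf
    rw [show (4:ℝ)^m = 2^(m*2) by rw [mul_comm, pow_mul]; norm_num]
    ring
  refine ⟨hid, ?_⟩
  have hg : Tendsto (fun n : ℕ =>
      ((3 : ℝ) - ((n : ℝ) + 1 / 2) * ((1 : ℝ) / 2) ^ n - (5 / 2) * ((3 : ℝ) / 4) ^ n)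
        / (1 - ((2 : ℝ) / 3) ^ n)) atTop (nhds 3) := by
    have h12 : Tendsto (fun n : ℕ => ((1 : ℝ) / 2) ^ n) atTop (nhds 0) :=
      tendsto_pow_atTop_nhds_zero_of_lt_one (by norm_num) (by norm_num)
    have h34 : Tendsto (fun n : ℕ => ((3 : ℝ) / 4) ^ n) atTop (nhds 0) :=
      tendsto_pow_atTop_nhds_zero_of_lt_one (by norm_num) (by norm_num)
    have h23 : Tendsto (fun n : ℕ => ((2 : ℝ) / 3) ^ n) atTop (nhds 0) :=
      tendsto_pow_atTop_nhds_zero_of_lt_one (by norm_num) (by norm_num)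
    have hn12 : Tendsto (fun n : ℕ => (n : ℝ) * ((1 : ℝ) / 2) ^ n) atTop (nhds 0) :=
      tendsto_self_mul_const_pow_of_lt_one (by norm_num) (by norm_num)
    have hnum : Tendsto (fun n : ℕ =>
        (3 : ℝ) - ((n : ℝ) + 1 / 2) * ((1 : ℝ) / 2) ^ n - (5 / 2) * ((3 : ℝ) / 4) ^ n)
        atTop (nhds 3) := by
      have := ((tendsto_const_nhds (x := (3:ℝ)) (f := atTop)).sub (hn12.add (h12.const_mul (1/2)))).sub (h34.const_mul (5/2))
      simpa using this.congr (fun n => by simp only [one_div, inv_pow]; ring)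
    have hden : Tendsto (fun n : ℕ => (1 : ℝ) - ((2 : ℝ) / 3) ^ n) atTop (nhds 1) := by
      simpa using tendsto_const_nhds.sub h23
    have := hnum.div hden (by norm_num)
    simpa [Pi.div_def] using this
  refine hg.congr' ?_
  filter_upwards [eventually_ge_atTop 1] with n hn
  rw [hid n hn]
  symm
  have hd2 : (1 : ℝ) - ((2 : ℝ) / 3) ^ n ≠ 0 := by
    have : ((2 : ℝ) / 3) ^ n < 1 ^ n :=
      pow_lt_pow_left₀ (by norm_num) (by norm_num) (by omega)
    simp at this; linarith
  rw [div_mul_eq_mul_div]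
  congr 1
  have e1 : ((4 : ℝ) / 3) ^ n * ((3 : ℝ) / 4) ^ n = 1 := by
    rw [← mul_pow]; norm_num
  have e2 : ((2 : ℝ) / 3) ^ n * ((3 : ℝ) / 4) ^ n = ((1 : ℝ) / 2) ^ n := by
    rw [← mul_pow]; norm_num
  calc (3 * ((4 : ℝ) / 3) ^ n - ((n : ℝ) + 1 / 2) * ((2 : ℝ) / 3) ^ n - 5 / 2) * ((3 : ℝ) / 4) ^ n
      = 3 * (((4 : ℝ) / 3) ^ n * ((3 : ℝ) / 4) ^ n)
        - ((n : ℝ) + 1/2) * (((2 : ℝ) / 3) ^ n * ((3 : ℝ) / 4) ^ n)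
        - 5/2 * ((3 : ℝ) / 4) ^ n := by ring
    _ = (3 : ℝ) - ((n : ℝ) + 1 / 2) * ((1 : ℝ) / 2) ^ n - (5 / 2) * ((3 : ℝ) / 4) ^ n := by
        rw [e1, e2]; ring
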